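/- Let A = (a_{ij}) be an n×n real matrix with A + Aᵀ negative definite, let m : [0,T] → ℝⁿ be measurable with each product m_i m_j integrable, and let p : [0,T] → ℝⁿ be absolutely continuous with p_i(0) ≥ 0 for all i and dp_i/dt = 2 Σ_{j=1}^n a_{ij} m_i(t) m_j(t) almost everywhere. If p_i(T) = 0 for i = 1,…,n−1, then p_n(T) = p_n(0) + ⟨A_n, M⟩, where M = ∫₀ᵀ m(t)m(t)ᵀ dt is positive semidefinite and satisfies ⟨A_i, M⟩ = −p_i(0) for i = 1,…,n−1; consequently p_n(T) ≤ p_n(0) + ℰ, where ℰ is the supremum of ⟨A_n, M⟩ over feasible M of the associated semidefinite program with p_i = p_i(0). -/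

import Mathlib

open Matrix

/-- Trace inner product on square matrices: ⟨X, Y⟩ = tr(XY). -/
noncomputable def ip {m : ℕ} (X Y : Matrix (Fin m) (Fin m) ℝ) : ℝ := (X * Y).trace

/-- For an m×m matrix `A`, the symmetric matrix `A_i = e_i a_iᵀ + a_i e_iᵀ`,
whose i-th row and column equal the i-th row of `A` (with (i,i) entry `2 A i i`),
all other entries zero. -/
noncomputable def sdpMat {m : ℕ} (A : Matrix (Fin m) (Fin m) ℝ) (i : Fin m) :
    Matrix (Fin m) (Fin m) ℝ :=
  Matrix.of fun k l => (if k = i then A i l else 0) + (if l = i then A i k else 0)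

/-- Feasibility for the semidefinite program associated to an (n+1)×(n+1) matrix `A`
and data `p`: `M ⪰ 0` and `⟨A_i, M⟩ = -p_i` for every non-final index `i`. -/
def Feasible {n : ℕ} (A : Matrix (Fin (n + 1)) (Fin (n + 1)) ℝ)
    (p : Fin (n + 1) → ℝ) (M : Matrix (Fin (n + 1)) (Fin (n + 1)) ℝ) : Prop :=
  M.PosSemidef ∧ ∀ i : Fin (n + 1), i ≠ Fin.last n → ip (sdpMat A i) M = -(p i)

open MeasureTheory


lemma diag_nonneg' {k : ℕ} {M : Matrix (Fin k) (Fin k) ℝ} (hM : M.PosSemidef) (i : Fin k) :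
    0 ≤ M i i := by
  simpa using hM.dotProduct_mulVec_nonneg (Pi.single i 1)

lemma trace_nonneg' {k : ℕ} {M : Matrix (Fin k) (Fin k) ℝ} (hM : M.PosSemidef) :
    0 ≤ M.trace :=
  Finset.sum_nonneg fun i _ => diag_nonneg' hM i

open scoped MatrixOrder Matrix.Norms.L2Operator in
lemma trace_mul_nonneg' {k : ℕ} {P Q : Matrix (Fin k) (Fin k) ℝ}
    (hP : P.PosSemidef) (hQ : Q.PosSemidef) : 0 ≤ (P * Q).trace := by
  obtain ⟨B, rfl⟩ := CStarAlgebra.nonneg_iff_eq_star_mul_self.mp hP.nonneg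
  rw [Matrix.star_eq_conjTranspose, Matrix.mul_assoc, Matrix.trace_mul_comm]
  exact trace_nonneg' (hQ.mul_mul_conjTranspose_same B)

lemma ip_sdpMat {k : ℕ} (A M : Matrix (Fin k) (Fin k) ℝ) (hM : ∀ a b, M a b = M b a)
    (i : Fin k) : ip (sdpMat A i) M = 2 * ∑ j, A i j * M i j := by
  unfold ip sdpMat
  simp only [Matrix.trace, Matrix.diag_apply, Matrix.mul_apply, Matrix.of_apply, add_mul,
    ite_mul, zero_mul, Finset.sum_add_distrib]
  have h1 : ∑ a : Fin k, ∑ l : Fin k, (if a = i then A i l * M l a else 0)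
      = ∑ l : Fin k, A i l * M l i := by
    rw [Finset.sum_comm]
    exact Finset.sum_congr rfl fun l _ => by simp
  have h2 : ∑ a : Fin k, ∑ l : Fin k, (if l = i then A i a * M l a else 0)
      = ∑ a : Fin k, A i a * M i a :=
    Finset.sum_congr rfl fun a _ => by simp
  rw [h1, h2, two_mul]
  congr 1
  exact Finset.sum_congr rfl fun j _ => by rw [hM]

lemma sum_sdpMat {k : ℕ} (A : Matrix (Fin k) (Fin k) ℝ) :
    ∑ i, sdpMat A i = A + Aᵀ := by
  ext a b
  simp [sdpMat, Matrix.sum_apply, Finset.sum_add_distrib]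

lemma ip_bound {n : ℕ} (A : Matrix (Fin (n + 1)) (Fin (n + 1)) ℝ)
    (hA : (-(A + Aᵀ)).PosDef) (p0 : Fin (n + 1) → ℝ)
    (M : Matrix (Fin (n + 1)) (Fin (n + 1)) ℝ) (hF : Feasible A p0 M) :
    ip (sdpMat A (Fin.last n)) M ≤ ∑ i ∈ Finset.univ.erase (Fin.last n), p0 i := by
  have hsym : ∀ a b, M a b = M b a := by
    intro a b
    have h := congrFun (congrFun hF.1.isHermitian a) b
    simpa using h.symm
  have hsum : ∑ i, ip (sdpMat A i) M = ((A + Aᵀ) * M).trace := by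
    rw [← sum_sdpMat A]
    unfold ip
    rw [Finset.sum_mul, Matrix.trace_sum]
  have htr : ((A + Aᵀ) * M).trace ≤ 0 := by
    have := trace_mul_nonneg' hA.posSemidef hF.1
    rw [Matrix.neg_mul, Matrix.trace_neg] at this
    linarith
  have hsplit : ∑ i ∈ Finset.univ.erase (Fin.last n), ip (sdpMat A i) M
      + ip (sdpMat A (Fin.last n)) M = ∑ i, ip (sdpMat A i) M :=
    Finset.sum_erase_add _ _ (Finset.mem_univ _)
  have hval : ∑ i ∈ Finset.univ.erase (Fin.last n), ip (sdpMat A i) M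
      = ∑ i ∈ Finset.univ.erase (Fin.last n), -(p0 i) :=
    Finset.sum_congr rfl fun i hi => hF.2 i (Finset.ne_of_mem_erase hi)
  rw [hval] at hsplit
  rw [Finset.sum_neg_distrib] at hsplit
  linarith [hsum ▸ hsplit, htr]

/-- If `p` is (absolutely continuous, given via the fundamental theorem of calculus) a
solution of `dp_i/dt = 2 ∑_j a_{ij} m_i m_j` with `p_i(0) ≥ 0` and `p_i(T) = 0` for
`i ≠ n`, then `p_n(T) = p_n(0) + ⟨A_n, M⟩`, where `M = ∫₀ᵀ m mᵀ dt` is feasible for the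
associated semidefinite program; consequently `p_n(T) ≤ p_n(0) + ℰ`, where `ℰ` is the
supremum of the objective over feasible matrices. -/
theorem trajectory_value_eq_sdp_objective (n : ℕ)
    (A : Matrix (Fin (n + 1)) (Fin (n + 1)) ℝ)
    (hA : (-(A + Aᵀ)).PosDef)
    (T : ℝ) (hT : 0 ≤ T)
    (m : ℝ → Fin (n + 1) → ℝ)
    (hmeas : ∀ i, Measurable fun t => m t i)
    (hint : ∀ i j, IntegrableOn (fun t => m t i * m t j) (Set.Ioc 0 T))
    (p : ℝ → Fin (n + 1) → ℝ)
    (hp0 : ∀ i, 0 ≤ p 0 i)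
    (hpeq : ∀ i, ∀ t ∈ Set.Icc (0 : ℝ) T,
      p t i = p 0 i + ∫ s in Set.Ioc (0 : ℝ) t, 2 * ∑ j, A i j * (m s i * m s j))
    (hend : ∀ i : Fin (n + 1), i ≠ Fin.last n → p T i = 0) :
    Feasible A (fun i => p 0 i)
      (Matrix.of fun i j => ∫ t in Set.Ioc (0 : ℝ) T, m t i * m t j) ∧
    p T (Fin.last n) = p 0 (Fin.last n) +
      ip (sdpMat A (Fin.last n))
        (Matrix.of fun i j => ∫ t in Set.Ioc (0 : ℝ) T, m t i * m t j) ∧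
    p T (Fin.last n) ≤ p 0 (Fin.last n) +
      sSup {E : ℝ | ∃ M', Feasible A (fun i => p 0 i) M' ∧
        ip (sdpMat A (Fin.last n)) M' = E} := by
  set M : Matrix (Fin (n + 1)) (Fin (n + 1)) ℝ :=
    Matrix.of fun i j => ∫ t in Set.Ioc (0 : ℝ) T, m t i * m t j with hMdef
  have hsym : ∀ a b, M a b = M b a := by
    intro a b
    simp only [hMdef, Matrix.of_apply]
    congr 1
    ext t
    ring
  -- key integral identity
  have hI : ∀ i : Fin (n + 1),
      (∫ s in Set.Ioc (0 : ℝ) T, 2 * ∑ j, A i j * (m s i * m s j))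
        = ip (sdpMat A i) M := by
    intro i
    rw [ip_sdpMat A M hsym i, MeasureTheory.integral_const_mul]
    congr 1
    rw [MeasureTheory.integral_finset_sum _ (fun j _ => (hint i j).const_mul _)]
    exact Finset.sum_congr rfl fun j _ => (MeasureTheory.integral_const_mul _ _)
  have hPT : ∀ i : Fin (n + 1), p T i = p 0 i + ip (sdpMat A i) M := by
    intro i
    rw [hpeq i T ⟨hT, le_refl T⟩, hI i]
  -- positive semidefiniteness
  have hPSD : M.PosSemidef := by
    refine Matrix.posSemidef_iff_dotProduct_mulVec.mpr ⟨?_, ?_⟩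
    · ext a b
      simp only [Matrix.conjTranspose_apply, star_trivial]
      exact hsym b a
    · intro x
      have hx : star x = x := by
        funext a; simp
      rw [hx]
      have hdp : x ⬝ᵥ (M *ᵥ x)
          = ∫ t in Set.Ioc (0 : ℝ) T, (∑ a, x a * m t a) ^ 2 := by
        have hpt : ∀ t : ℝ, (∑ a, x a * m t a) ^ 2
            = ∑ a, ∑ b, (x a * x b) * (m t a * m t b) := by
          intro t
          rw [sq, Finset.sum_mul_sum]
          exact Finset.sum_congr rfl fun a _ => Finset.sum_congr rfl fun b _ => by ring
        calc x ⬝ᵥ (M *ᵥ x) = ∑ a, ∑ b, (x a * x b) * M a b := by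
              simp only [dotProduct, Matrix.mulVec, dotProduct, Finset.mul_sum]
              exact Finset.sum_congr rfl fun a _ => Finset.sum_congr rfl fun b _ => by ring
          _ = ∑ a, ∑ b, ∫ t in Set.Ioc (0 : ℝ) T, (x a * x b) * (m t a * m t b) := by
              exact Finset.sum_congr rfl fun a _ => Finset.sum_congr rfl fun b _ =>
                (MeasureTheory.integral_const_mul _ _).symm
          _ = ∫ t in Set.Ioc (0 : ℝ) T, ∑ a, ∑ b, (x a * x b) * (m t a * m t b) := by
              rw [MeasureTheory.integral_finset_sum _
                (fun a _ => MeasureTheory.integrable_finset_sum _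
                  (fun b _ => (hint a b).const_mul _))]
              exact Finset.sum_congr rfl fun a _ =>
                (MeasureTheory.integral_finset_sum _ (fun b _ => (hint a b).const_mul _)).symm
          _ = ∫ t in Set.Ioc (0 : ℝ) T, (∑ a, x a * m t a) ^ 2 := by
              congr 1
              ext t
              exact (hpt t).symm
      rw [hdp]
      exact MeasureTheory.integral_nonneg fun t => sq_nonneg _
  have hFeas : Feasible A (fun i => p 0 i) M := by
    refine ⟨hPSD, fun i hi => ?_⟩
    have := hPT i
    rw [hend i hi] at this
    linarith
  refine ⟨hFeas, hPT (Fin.last n), ?_⟩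
  rw [hPT (Fin.last n)]
  have hmem : ip (sdpMat A (Fin.last n)) M ∈
      {E : ℝ | ∃ M', Feasible A (fun i => p 0 i) M' ∧ ip (sdpMat A (Fin.last n)) M' = E} :=
    ⟨M, hFeas, rfl⟩
  have hbdd : BddAbove
      {E : ℝ | ∃ M', Feasible A (fun i => p 0 i) M' ∧ ip (sdpMat A (Fin.last n)) M' = E} := by
    refine ⟨∑ i ∈ Finset.univ.erase (Fin.last n), p 0 i, fun E hE => ?_⟩
    obtain ⟨M', hF', rfl⟩ := hE
    exact ip_bound A hA _ M' hF'
  linarith [le_csSup hbdd hmem]
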